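/- Let R be a finite ring with identity and let χ be a generating character of R. Then for every x ∈ R, μ(0, Rx) = Σ_{y : Ry = Rx} χ(y), where the sum is over all elements y of R generating the same principal left ideal as x, and μ(0, Rx) is the value of the Möbius function of the poset of principal left ideals of R (ordered by inclusion) on the interval from the zero ideal to Rx. -/

import Mathlib

/-- `χ` is a generating character of the ring `R`: an additive character of `R` (with
values in the multiplicative monoid of `ℂ`, hence in the nonzero complex numbers) whose
restriction to every nonzero principal left ideal of `R` is not the trivial character. -/
def IsGeneratingCharacter {R : Type*} [Ring R] (χ : AddChar R ℂ) : Prop :=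
  ∀ I : Ideal R, (∃ x : R, I = Ideal.span {x}) → I ≠ ⊥ → ∃ y ∈ I, χ y ≠ 1

/-- `μ` is the Möbius function of the partial order `α`. -/
def IsMobiusFunction {α : Type*} [PartialOrder α] (μ : α → α → ℤ) : Prop :=
  (∀ a : α, μ a a = 1) ∧
  (∀ a b : α, ¬ a ≤ b → μ a b = 0) ∧
  (∀ a b : α, a < b → ∑ᶠ c ∈ {c : α | a ≤ c ∧ c ≤ b}, μ a c = 0)

open scoped Classical in
open Finset in
/-- The sum of a generating character over a nonzero principal left ideal vanishes. -/
lemma sum_gen_char_eq_zero {R : Type*} [Ring R] [Fintype R]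
    (χ : AddChar R ℂ) (hχ : IsGeneratingCharacter χ) (I : Ideal R)
    (hp : ∃ z : R, I = Ideal.span {z}) (hI : I ≠ ⊥) :
    ∑ y ∈ univ.filter (fun y : R => y ∈ I), χ y = 0 := by
  obtain ⟨y, hyI, hy1⟩ := hχ I hp hI
  let ψ : AddChar I ℂ := χ.compAddMonoidHom I.toAddSubgroup.subtype
  have hψ : ψ ≠ 0 := AddChar.ne_zero_iff.2 ⟨⟨y, hyI⟩, hy1⟩
  have hsum : ∑ a : I, ψ a = 0 := AddChar.sum_eq_zero_iff_ne_zero.2 hψ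
  rw [← hsum]
  rw [Finset.sum_subtype (p := fun a : R => a ∈ I)
    (univ.filter (fun y : R => y ∈ I)) (by simp) χ]
  rfl

/-- If `χ` is a generating character of the finite ring `R`, then for every
`x ∈ R`, `μ(0, Rx) = Σ_{y : Ry = Rx} χ(y)`, where `μ` is the Möbius function of the poset
of principal left ideals of `R` ordered by inclusion. -/
theorem mobius_eq_sum_generating_character (R : Type*) [Ring R] [Fintype R]
    (χ : AddChar R ℂ) (hχ : IsGeneratingCharacter χ)
    (μ : {J : Ideal R // ∃ y : R, J = Ideal.span {y}} →
         {J : Ideal R // ∃ y : R, J = Ideal.span {y}} → ℤ)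
    (hμ : IsMobiusFunction μ) (x : R) :
    (μ ⟨Ideal.span {(0 : R)}, 0, rfl⟩ ⟨Ideal.span {x}, x, rfl⟩ : ℂ) =
      ∑ᶠ y ∈ {y : R | Ideal.span {y} = Ideal.span {x}}, χ y := by
  classical
  haveI : Finite (Ideal R) :=
    Finite.of_injective (fun I : Ideal R => (I : Set R)) SetLike.coe_injective
  haveI : Fintype {J : Ideal R // ∃ y : R, J = Ideal.span {y}} := Fintype.ofFinite _
  set b : {J : Ideal R // ∃ y : R, J = Ideal.span {y}} := ⟨Ideal.span {(0 : R)}, 0, rfl⟩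
    with hb
  have hzero : Ideal.span ({0} : Set R) = (⊥ : Ideal R) := by simp
  have hbval : b.1 = ⊥ := hzero
  have hble : ∀ J : {J : Ideal R // ∃ y : R, J = Ideal.span {y}}, b ≤ J := fun J => by
    show b.1 ≤ J.1; rw [hbval]; exact bot_le
  set T : {J : Ideal R // ∃ y : R, J = Ideal.span {y}} → ℂ := fun J =>
    ∑ y ∈ Finset.univ.filter (fun y : R => Ideal.span {y} = J.1), χ y with hT
  -- partition lemma
  have hpart : ∀ J : {J : Ideal R // ∃ y : R, J = Ideal.span {y}},
      ∑ c ∈ Finset.univ.filter (fun c => c ≤ J), T c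
        = ∑ y ∈ Finset.univ.filter (fun y : R => y ∈ J.1), χ y := by
    intro J
    have hmaps : ∀ y ∈ Finset.univ.filter (fun y : R => y ∈ J.1),
        (⟨Ideal.span {y}, y, rfl⟩ : {J : Ideal R // ∃ y : R, J = Ideal.span {y}})
          ∈ Finset.univ.filter (fun c => c ≤ J) := by
      intro y hy
      simp only [Finset.mem_filter, Finset.mem_univ, true_and] at hy ⊢
      exact (Ideal.span_singleton_le_iff_mem J.1).2 hy
    rw [← Finset.sum_fiberwise_of_maps_to hmaps χ]
    apply Finset.sum_congr rfl
    intro c hc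
    simp only [Finset.mem_filter, Finset.mem_univ, true_and] at hc
    apply Finset.sum_congr _ (fun _ _ => rfl)
    ext y
    simp only [Finset.mem_filter, Finset.mem_univ, true_and]
    constructor
    · intro h
      have hyc : y ∈ c.1 := by
        have hself : y ∈ Ideal.span {y} := Ideal.subset_span rfl
        rwa [h] at hself
      exact ⟨hc hyc, Subtype.ext h⟩
    · intro h
      exact congrArg Subtype.val h.2
  -- value of the elementwise sum
  have hval : ∀ J : {J : Ideal R // ∃ y : R, J = Ideal.span {y}},
      ∑ y ∈ Finset.univ.filter (fun y : R => y ∈ J.1), χ y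
        = if J = b then 1 else 0 := by
    intro J
    by_cases hJ : J = b
    · rw [if_pos hJ, hJ]
      have : Finset.univ.filter (fun y : R => y ∈ b.1) = {0} := by
        ext y
        simp only [Finset.mem_filter, Finset.mem_univ, true_and, Finset.mem_singleton]
        simp [hbval]
      rw [this, Finset.sum_singleton, AddChar.map_zero_eq_one]
    · have hJb : J.1 ≠ ⊥ := by
        intro h; exact hJ (Subtype.ext (h.trans hbval.symm))
      rw [if_neg hJ]
      rw [show (Finset.univ.filter (fun y : R => y ∈ J.1))
        = Finset.univ.filter (fun y : R => y ∈ J.1) from rfl]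
      exact (Finset.sum_congr rfl fun _ _ => rfl).trans
        (by classical exact sum_gen_char_eq_zero χ hχ J.1 J.2 hJb)
  -- recursion for μ
  have hmu : ∀ J : {J : Ideal R // ∃ y : R, J = Ideal.span {y}},
      ∑ c ∈ Finset.univ.filter (fun c => c ≤ J), μ b c
        = if J = b then 1 else 0 := by
    intro J
    by_cases hJ : J = b
    · have hfil : Finset.univ.filter (fun c => c ≤ J) = {J} := by
        ext c
        simp only [Finset.mem_filter, Finset.mem_univ, true_and, Finset.mem_singleton]
        constructor
        · intro h
          refine le_antisymm h ?_
          rw [hJ]; exact hble c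
        · intro h; rw [h]
      rw [if_pos hJ, hfil, Finset.sum_singleton, hJ, hμ.1]
    · have hlt : b < J := lt_of_le_of_ne (hble J) (Ne.symm hJ)
      have h0 := hμ.2.2 b J hlt
      have hset : {c | b ≤ c ∧ c ≤ J}
          = ↑(Finset.univ.filter (fun c => c ≤ J)) := by
        ext c; simp [hble c]
      rw [hset, finsum_mem_coe_finset] at h0
      rw [if_neg hJ, h0]
  -- main claim by strong induction
  have key : ∀ J : {J : Ideal R // ∃ y : R, J = Ideal.span {y}}, (μ b J : ℂ) = T J := by
    intro J
    induction J using WellFoundedLT.induction with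
    | ind J ih =>
      have h1 : ∑ c ∈ Finset.univ.filter (fun c => c ≤ J), (μ b c : ℂ)
          = ∑ c ∈ Finset.univ.filter (fun c => c ≤ J), T c := by
        rw [hpart, hval, ← Int.cast_sum, hmu]
        split_ifs <;> simp
      have hsplit : Finset.univ.filter (fun c => c ≤ J)
          = insert J (Finset.univ.filter (fun c => c < J)) := by
        ext c
        simp only [Finset.mem_filter, Finset.mem_univ, true_and, Finset.mem_insert]
        constructor
        · intro h
          rcases eq_or_lt_of_le h with h | h
          · exact Or.inl h
          · exact Or.inr h
        · rintro (rfl | h)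
          · exact le_refl _
          · exact h.le
      have hnotmem : J ∉ Finset.univ.filter (fun c => c < J) := by simp
      rw [hsplit, Finset.sum_insert hnotmem, Finset.sum_insert hnotmem] at h1
      have h2 : ∑ c ∈ Finset.univ.filter (fun c => c < J), (μ b c : ℂ)
          = ∑ c ∈ Finset.univ.filter (fun c => c < J), T c := by
        apply Finset.sum_congr rfl
        intro c hc
        simp only [Finset.mem_filter, Finset.mem_univ, true_and] at hc
        exact ih c hc
      rw [h2] at h1
      exact add_right_cancel h1
  -- conclude
  have hfin : {y : R | Ideal.span {y} = Ideal.span {x}}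
      = ↑(Finset.univ.filter (fun y : R => Ideal.span {y} =
          (⟨Ideal.span {x}, x, rfl⟩ :
            {J : Ideal R // ∃ y : R, J = Ideal.span {y}}).1)) := by
    ext y; simp
  rw [hfin, finsum_mem_coe_finset]
  exact key ⟨Ideal.span {x}, x, rfl⟩
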